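/- For every real δ with 0 < δ ≤ 1 there exist η₀ > 0 and, for each η ∈ (0, η₀], an n₀ ∈ ℕ such that the following holds for all n ≥ n₀. Let G be an n-vertex graph, let 𝒞 be a 2-factor of G with e(H_𝒞) ≥ n^{2−η}, let k be an integer with 2 ≤ k ≤ n^{1−δ}, and let 𝒞* be a 2-factor of G consisting of exactly k−1 cycles such that |E(𝒞*) △ E(𝒞)| ≤ 12(k−1). Then there exist (not necessarily distinct) cycles C and C' among the components of 𝒞* and sets X ⊆ E(C) and Y ⊆ E(C'), each of size at least n^{δ/2}, such that Σ_{e∈X} |N_{H_𝒞}(e) ∩ Y| ≥ 4·|X ∪ Y|^{1+η}. -/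

import Mathlib

/-- `H` is a 2-factor of `G`: a spanning 2-regular subgraph of `G`
(viewed as a graph on the same vertex set). -/
def IsTwoFactor {V : Type*} (G H : SimpleGraph V) : Prop :=
  H ≤ G ∧ ∀ v : V, (H.neighborSet v).ncard = 2

/-- The number of cycles of a 2-factor, i.e. its number of connected components. -/
noncomputable def numCycles {V : Type*} (H : SimpleGraph V) : ℕ :=
  Nat.card H.ConnectedComponent

/-- Adjacency in the auxiliary graph `H_C`: two distinct non-incident edges `e, e'` of the
2-factor (or Hamilton cycle) `C` are adjacent iff `G` contains a 4-cycle containing both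
`e` and `e'` and no other edge of `C`. -/
def AuxAdj {V : Type*} (G C : SimpleGraph V) (e e' : Sym2 V) : Prop :=
  e ∈ C.edgeSet ∧ e' ∈ C.edgeSet ∧ e ≠ e' ∧ (∀ v : V, ¬ (v ∈ e ∧ v ∈ e')) ∧
    ∃ x y z w : V, e = s(x, y) ∧ e' = s(z, w) ∧
      G.Adj y z ∧ G.Adj w x ∧ ¬ C.Adj y z ∧ ¬ C.Adj w x

/-- `e(H_C)`: the number of edges of the auxiliary graph `H_C`. -/
noncomputable def auxEdgeCount {V : Type*} (G C : SimpleGraph V) : ℕ :=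
  ({q : Sym2 (Sym2 V) | ∃ e e' : Sym2 V, AuxAdj G C e e' ∧ q = s(e, e')}).ncard

/-- `N_{H_C}(e)`: the neighbourhood of the edge `e` in the auxiliary graph `H_C`. -/
def auxNeighborSet {V : Type*} (G C : SimpleGraph V) (e : Sym2 V) : Set (Sym2 V) :=
  {e' : Sym2 V | AuxAdj G C e e'}

/-- The edge set of the cycle of the 2-factor `H` corresponding to the connected
component `c`. -/
def compEdges {V : Type*} (H : SimpleGraph V) (c : H.ConnectedComponent) :
    Set (Sym2 V) :=
  {e : Sym2 V | e ∈ H.edgeSet ∧ ∀ v ∈ e, H.connectedComponentMk v = c}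

theorem auxAdj_symm {V : Type*} {G C : SimpleGraph V} {e e' : Sym2 V}
    (h : AuxAdj G C e e') : AuxAdj G C e' e := by
  obtain ⟨h1, h2, h3, h4, x, y, z, w, he, he', gyz, gwx, cyz, cwx⟩ := h
  exact ⟨h2, h1, h3.symm, fun v hv => h4 v ⟨hv.2, hv.1⟩,
    z, w, x, y, he', he, gwx, gyz, cwx, cyz⟩

theorem twoRegular_edgeFinset_card {n : ℕ} (H : SimpleGraph (Fin n))
    [DecidableRel H.Adj]
    (h : ∀ v, (H.neighborSet v).ncard = 2) : H.edgeFinset.card = n := by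
  have hd : ∀ v, H.degree v = 2 := by
    intro v
    rw [← SimpleGraph.card_neighborSet_eq_degree, ← Set.toFinset_card,
      ← Set.ncard_eq_toFinset_card']
    exact h v
  have hs := H.sum_degrees_eq_twice_card_edges
  simp only [hd, Finset.sum_const, Finset.card_univ, Fintype.card_fin, smul_eq_mul] at hs
  omega

theorem sym2_out_mk {α : Type*} (e e' : α) :
    (s(e, e') : Sym2 α).out = (e, e') ∨ (s(e, e') : Sym2 α).out = (e', e) := by
  have hq : Sym2.mk (s(e, e') : Sym2 α).out.1 (s(e, e') : Sym2 α).out.2 = s(e, e') := Quot.out_eq _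
  rcases Sym2.eq_iff.mp hq with ⟨h1, h2⟩ | ⟨h1, h2⟩
  · exact Or.inl (Prod.ext h1 h2)
  · exact Or.inr (Prod.ext h1 h2)

theorem stmt13_test : True := trivial

set_option maxHeartbeats 1600000 in
theorem stmt13 (δ : ℝ) (hδ0 : 0 < δ) (hδ1 : δ ≤ 1) :
    ∃ η₀ : ℝ, 0 < η₀ ∧ ∀ η : ℝ, 0 < η → η ≤ η₀ →
      ∃ n₀ : ℕ, ∀ n : ℕ, n₀ ≤ n →
        ∀ (G C Cstar : SimpleGraph (Fin n)) (k : ℕ),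
          IsTwoFactor G C → (n : ℝ) ^ (2 - η) ≤ (auxEdgeCount G C : ℝ) →
          2 ≤ k → (k : ℝ) ≤ (n : ℝ) ^ (1 - δ) →
          IsTwoFactor G Cstar → numCycles Cstar = k - 1 →
          ((symmDiff Cstar.edgeSet C.edgeSet).ncard : ℝ) ≤ 12 * ((k : ℝ) - 1) →
          ∃ (c c' : Cstar.ConnectedComponent) (X Y : Finset (Sym2 (Fin n))),
            ↑X ⊆ compEdges Cstar c ∧ ↑Y ⊆ compEdges Cstar c' ∧
            (n : ℝ) ^ (δ / 2) ≤ (X.card : ℝ) ∧ (n : ℝ) ^ (δ / 2) ≤ (Y.card : ℝ) ∧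
            4 * ((X ∪ Y).card : ℝ) ^ (1 + η) ≤
              ∑ e ∈ X, (((auxNeighborSet G C e) ∩ ↑Y).ncard : ℝ) := by
  refine ⟨δ / 8, by positivity, fun η hη0 hηδ => ?_⟩
  refine ⟨max 1 ⌈(68 : ℝ) ^ (8 / (3 * δ))⌉₊,
    fun n hn G C Cstar k hC hA hk2 hk hCstar hnum hsym => ?_⟩
  classical
  by_contra hcon
  push_neg at hcon
  -- basic real-number facts
  have hn1 : 1 ≤ n := le_trans (le_max_left _ _) hn
  set R : ℝ := (n : ℝ) with hRdef
  have hR1 : (1 : ℝ) ≤ R := by rw [hRdef]; exact_mod_cast hn1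
  have hR0 : (0 : ℝ) < R := lt_of_lt_of_le one_pos hR1
  have hmono : ∀ a b : ℝ, a ≤ b → R ^ a ≤ R ^ b := fun a b hab =>
    Real.rpow_le_rpow_of_exponent_le hR1 hab
  have hadd : ∀ a b : ℝ, R ^ a * R ^ b = R ^ (a + b) := fun a b =>
    (Real.rpow_add hR0 a b).symm
  have h68 : (68 : ℝ) ≤ R ^ (3 * δ / 8) := by
    have h1 : ((68 : ℝ) ^ (8 / (3 * δ))) ≤ R := by
      have h2 := le_trans (le_max_right _ _) hn
      exact_mod_cast Nat.ceil_le.mp h2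
    have h3 : (8 / (3 * δ)) * (3 * δ / 8) = 1 := by field_simp
    calc (68 : ℝ) = ((68 : ℝ) ^ (8 / (3 * δ))) ^ (3 * δ / 8) := by
          rw [← Real.rpow_mul (by norm_num : (0:ℝ) ≤ 68), h3, Real.rpow_one]
      _ ≤ R ^ (3 * δ / 8) := Real.rpow_le_rpow (by positivity) h1 (by positivity)
  -- the ordered pair set
  set A : Finset (Sym2 (Fin n) × Sym2 (Fin n)) :=
    Finset.univ.filter (fun p => AuxAdj G C p.1 p.2) with hAdef
  have hmemA : ∀ p : Sym2 (Fin n) × Sym2 (Fin n), p ∈ A ↔ AuxAdj G C p.1 p.2 := by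
    intro p; simp [hAdef]
  -- lower bound on |A|
  have hAcard : R ^ (2 - η) ≤ (A.card : ℝ) := by
    refine le_trans hA ?_
    have hsub : (Quot.out '' {q : Sym2 (Sym2 (Fin n)) |
        ∃ e e' : Sym2 (Fin n), AuxAdj G C e e' ∧ q = s(e, e')}) ⊆ ↑A := by
      rintro p ⟨q, ⟨e, e', hadj, rfl⟩, rfl⟩
      rw [Finset.mem_coe, hmemA]
      rcases sym2_out_mk e e' with h | h <;> rw [h]
      · exact hadj
      · exact auxAdj_symm hadj
    have hinj : Function.Injective (Quot.out : Sym2 (Sym2 (Fin n)) → _) := by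
      intro a b hab
      rw [← Quot.out_eq a, ← Quot.out_eq b, hab]
    have := Set.ncard_le_ncard hsub (A.finite_toSet)
    rw [Set.ncard_image_of_injective _ hinj, Set.ncard_coe_finset] at this
    exact_mod_cast this
  -- edge counts
  have hCe : C.edgeFinset.card = n := twoRegular_edgeFinset_card C hC.2
  have hCse : Cstar.edgeFinset.card = n := twoRegular_edgeFinset_card Cstar hCstar.2
  -- second coordinate of A is always an edge of C
  have hA2C : ∀ p ∈ A, p.1 ∈ C.edgeFinset ∧ p.2 ∈ C.edgeFinset := by
    intro p hp
    rw [hmemA] at hp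
    exact ⟨SimpleGraph.mem_edgeFinset.mpr hp.1, SimpleGraph.mem_edgeFinset.mpr hp.2.1⟩
  -- connected components
  haveI : Fintype Cstar.ConnectedComponent := Fintype.ofFinite _
  have hcompcard : (Fintype.card Cstar.ConnectedComponent : ℝ) ≤ R ^ (1 - δ) := by
    have h1 : Fintype.card Cstar.ConnectedComponent = k - 1 := by
      rw [← Nat.card_eq_fintype_card]; exact hnum
    have h2 : ((k - 1 : ℕ) : ℝ) ≤ (k : ℝ) := by exact_mod_cast Nat.sub_le k 1
    rw [h1]; exact le_trans h2 hk
  -- the component of an edge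
  set g : Sym2 (Fin n) → Cstar.ConnectedComponent :=
    fun e => Cstar.connectedComponentMk e.out.1 with hgdef
  have hgmem : ∀ e ∈ Cstar.edgeSet, e ∈ compEdges Cstar (g e) := by
    intro e he
    refine ⟨he, fun v hv => ?_⟩
    have hout : Sym2.mk e.out.1 e.out.2 = e := Quot.out_eq e
    have hadj : Cstar.Adj e.out.1 e.out.2 := by
      rw [← hout] at he
      exact Cstar.mem_edgeSet.mp he
    have hv' : v = e.out.1 ∨ v = e.out.2 := by
      rw [← hout] at hv
      exact Sym2.mem_iff.mp hv
    rcases hv' with rfl | rfl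
    · rfl
    · exact (SimpleGraph.ConnectedComponent.connectedComponentMk_eq_of_adj hadj).symm
  have hgof : ∀ (c) (e : Sym2 (Fin n)), e ∈ compEdges Cstar c → g e = c := by
    intro c e he
    exact he.2 e.out.1 (Sym2.out_fst_mem e)
  -- the edge sets of the cycles (restricted to edges of C)
  set X : Cstar.ConnectedComponent → Finset (Sym2 (Fin n)) :=
    fun c => Finset.univ.filter (fun e => e ∈ compEdges Cstar c ∧ e ∈ C.edgeSet) with hXdef
  have hmemX : ∀ c e, e ∈ X c ↔ e ∈ compEdges Cstar c ∧ e ∈ C.edgeSet := by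
    intro c e; simp [hXdef]
  have hXsub : ∀ c, ↑(X c) ⊆ compEdges Cstar c := by
    intro c e he
    exact ((hmemX c e).mp he).1
  have hXsubC : ∀ c, X c ⊆ C.edgeFinset := fun c e he =>
    SimpleGraph.mem_edgeFinset.mpr ((hmemX c e).mp he).2
  have hXdisj : ∀ c c', c ≠ c' → Disjoint (X c) (X c') := by
    intro c c' hne
    rw [Finset.disjoint_left]
    intro e h1 h2
    exact hne ((hgof c e ((hmemX c e).mp h1).1).symm.trans (hgof c' e ((hmemX c' e).mp h2).1))
  have hXsum : ∀ s : Finset Cstar.ConnectedComponent, ∑ c ∈ s, (X c).card ≤ n := by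
    intro s
    rw [← Finset.card_biUnion (fun c _ c' _ h => hXdisj c c' h)]
    calc (s.biUnion X).card ≤ C.edgeFinset.card := by
          refine Finset.card_le_card (fun e he => ?_)
          obtain ⟨c, _, hc⟩ := Finset.mem_biUnion.mp he
          exact hXsubC c hc
      _ = n := hCe
  -- big and small components
  set bigs : Finset Cstar.ConnectedComponent :=
    Finset.univ.filter (fun c => R ^ (δ / 2) ≤ ((X c).card : ℝ)) with hbigsdef
  set U : Finset (Sym2 (Fin n)) := bigs.biUnion X with hUdef
  set smalls : Finset Cstar.ConnectedComponent :=
    Finset.univ.filter (fun c => ¬ (R ^ (δ / 2) ≤ ((X c).card : ℝ))) with hsmallsdef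
  set W : Finset (Sym2 (Fin n)) := smalls.biUnion X with hWdef
  set D : Finset (Sym2 (Fin n)) := C.edgeFinset \ Cstar.edgeFinset with hDdef
  have hDcard : (D.card : ℝ) ≤ 12 * R ^ (1 - δ) := by
    have hsub : ↑D ⊆ symmDiff Cstar.edgeSet C.edgeSet := by
      intro e he
      rw [hDdef, Finset.coe_sdiff, Set.mem_diff] at he
      rw [Set.mem_symmDiff]
      refine Or.inr ⟨?_, ?_⟩
      · exact SimpleGraph.mem_edgeFinset.mp (Finset.mem_coe.mp he.1)
      · intro h
        exact he.2 (Finset.mem_coe.mpr (SimpleGraph.mem_edgeFinset.mpr h))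
    have h1 := Set.ncard_le_ncard hsub (Set.toFinite _)
    rw [Set.ncard_coe_finset] at h1
    have h2 : ((D.card : ℕ) : ℝ) ≤ 12 * ((k : ℝ) - 1) := le_trans (by exact_mod_cast h1) hsym
    have h3 : (k : ℝ) - 1 ≤ R ^ (1 - δ) := by linarith [hk]
    nlinarith [h2, h3]
  have hsmallscard : (smalls.card : ℝ) ≤ R ^ (1 - δ) := by
    refine le_trans ?_ hcompcard
    exact_mod_cast Finset.card_le_univ smalls
  have hbigscard : (bigs.card : ℝ) ≤ R ^ (1 - δ) := by
    refine le_trans ?_ hcompcard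
    exact_mod_cast Finset.card_le_univ bigs
  have hWcard : (W.card : ℝ) ≤ R ^ (1 - δ) * R ^ (δ / 2) := by
    have h1 : W.card ≤ ∑ c ∈ smalls, (X c).card := Finset.card_biUnion_le
    have h2 : (∑ c ∈ smalls, ((X c).card : ℝ)) ≤ ∑ _c ∈ smalls, R ^ (δ / 2) := by
      refine Finset.sum_le_sum fun c hc => ?_
      exact le_of_not_ge (Finset.mem_filter.mp hc).2
    calc (W.card : ℝ) ≤ ∑ c ∈ smalls, ((X c).card : ℝ) := by exact_mod_cast h1
      _ ≤ ∑ _c ∈ smalls, R ^ (δ / 2) := h2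
      _ = (smalls.card : ℝ) * R ^ (δ / 2) := by rw [Finset.sum_const, nsmul_eq_mul]
      _ ≤ R ^ (1 - δ) * R ^ (δ / 2) := by
          have : (0:ℝ) ≤ R ^ (δ / 2) := (Real.rpow_pos_of_pos hR0 _).le
          nlinarith [hsmallscard]
  -- edges outside big components are few
  have hUg : ∀ e ∈ U, g e ∈ bigs ∧ e ∈ X (g e) := by
    intro e he
    obtain ⟨c, hc, hec⟩ := Finset.mem_biUnion.mp he
    have : g e = c := hgof c e ((hmemX c e).mp hec).1
    rw [this]
    exact ⟨hc, hec⟩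
  have hkey : ∀ e, e ∈ C.edgeFinset → e ∉ U → e ∈ D ∪ W := by
    intro e heC heU
    by_cases hstar : e ∈ Cstar.edgeFinset
    · have hx : e ∈ X (g e) := (hmemX _ e).mpr
        ⟨hgmem e (SimpleGraph.mem_edgeFinset.mp hstar), SimpleGraph.mem_edgeFinset.mp heC⟩
      by_cases hb : R ^ (δ / 2) ≤ ((X (g e)).card : ℝ)
      · exact absurd (Finset.mem_biUnion.mpr
          ⟨g e, Finset.mem_filter.mpr ⟨Finset.mem_univ _, hb⟩, hx⟩) heU
      · exact Finset.mem_union_right _ (Finset.mem_biUnion.mpr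
          ⟨g e, Finset.mem_filter.mpr ⟨Finset.mem_univ _, hb⟩, hx⟩)
    · exact Finset.mem_union_left _ (Finset.mem_sdiff.mpr ⟨heC, hstar⟩)
  set B : Finset (Sym2 (Fin n) × Sym2 (Fin n)) :=
    A.filter (fun p => p.1 ∈ U ∧ p.2 ∈ U) with hBdef
  have hsplit : A.card ≤ B.card + ((D ∪ W) ×ˢ C.edgeFinset).card
      + (C.edgeFinset ×ˢ (D ∪ W)).card := by
    have hsub : A ⊆ B ∪ ((D ∪ W) ×ˢ C.edgeFinset) ∪ (C.edgeFinset ×ˢ (D ∪ W)) := by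
      intro p hp
      by_cases h1 : p.1 ∈ U
      · by_cases h2 : p.2 ∈ U
        · exact Finset.mem_union_left _
            (Finset.mem_union_left _ (Finset.mem_filter.mpr ⟨hp, h1, h2⟩))
        · exact Finset.mem_union_right _
            (Finset.mem_product.mpr ⟨(hA2C p hp).1, hkey _ (hA2C p hp).2 h2⟩)
      · exact Finset.mem_union_left _ (Finset.mem_union_right _
          (Finset.mem_product.mpr ⟨hkey _ (hA2C p hp).1 h1, (hA2C p hp).2⟩))
    calc A.card ≤ (B ∪ ((D ∪ W) ×ˢ C.edgeFinset) ∪ (C.edgeFinset ×ˢ (D ∪ W))).card :=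
          Finset.card_le_card hsub
      _ ≤ (B ∪ ((D ∪ W) ×ˢ C.edgeFinset)).card + (C.edgeFinset ×ˢ (D ∪ W)).card :=
          Finset.card_union_le _ _
      _ ≤ _ := add_le_add_left (Finset.card_union_le _ _) _
  have hDW : ((D ∪ W).card : ℝ) ≤ 13 * R ^ (1 - δ / 2) := by
    have h1 : ((D ∪ W).card : ℝ) ≤ (D.card : ℝ) + (W.card : ℝ) := by
      exact_mod_cast Finset.card_union_le D W
    have h2 : R ^ (1 - δ) * R ^ (δ / 2) = R ^ (1 - δ / 2) := by
      rw [hadd, show 1 - δ + δ / 2 = 1 - δ / 2 by ring]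
    have h3 : R ^ (1 - δ) ≤ R ^ (1 - δ / 2) := hmono _ _ (by linarith)
    calc ((D ∪ W).card : ℝ) ≤ (D.card : ℝ) + (W.card : ℝ) := h1
      _ ≤ 12 * R ^ (1 - δ) + R ^ (1 - δ) * R ^ (δ / 2) := add_le_add hDcard hWcard
      _ ≤ 12 * R ^ (1 - δ / 2) + R ^ (1 - δ / 2) := by
          rw [h2]; linarith [h3]
      _ = 13 * R ^ (1 - δ / 2) := by ring
  have hAB : (A.card : ℝ) ≤ (B.card : ℝ) + 26 * R ^ (1 - δ / 2) * R := by
    have h1 : (((D ∪ W) ×ˢ C.edgeFinset).card : ℝ) = ((D ∪ W).card : ℝ) * R := by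
      rw [Finset.card_product, hCe]; push_cast; rw [hRdef]
    have h2 : ((C.edgeFinset ×ˢ (D ∪ W)).card : ℝ) = R * ((D ∪ W).card : ℝ) := by
      rw [Finset.card_product, hCe]; push_cast; rw [hRdef]
    have h3 : (A.card : ℝ) ≤ (B.card : ℝ) + (((D ∪ W) ×ˢ C.edgeFinset).card : ℝ)
        + ((C.edgeFinset ×ˢ (D ∪ W)).card : ℝ) := by exact_mod_cast hsplit
    rw [h1, h2] at h3
    have h4 : ((D ∪ W).card : ℝ) * R ≤ 13 * R ^ (1 - δ / 2) * R :=
      mul_le_mul_of_nonneg_right hDW hR0.le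
    linarith [h3, h4]
  -- fiberwise decomposition of B
  have hBfib : B.card
      = ∑ cc ∈ bigs ×ˢ bigs, (B.filter (fun p => (g p.1, g p.2) = cc)).card := by
    refine Finset.card_eq_sum_card_fiberwise fun p hp => ?_
    obtain ⟨hpA, h1, h2⟩ := Finset.mem_filter.mp hp
    exact Finset.mem_product.mpr ⟨(hUg _ h1).1, (hUg _ h2).1⟩
  have hfib : ∀ cc ∈ bigs ×ˢ bigs,
      ((B.filter (fun p => (g p.1, g p.2) = cc)).card : ℝ)
        ≤ 4 * R ^ η * (((X cc.1).card : ℝ) + ((X cc.2).card : ℝ)) := by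
    rintro ⟨c, c'⟩ hcc
    obtain ⟨hc, hc'⟩ := Finset.mem_product.mp hcc
    have hbigc : R ^ (δ / 2) ≤ ((X c).card : ℝ) := (Finset.mem_filter.mp hc).2
    have hbigc' : R ^ (δ / 2) ≤ ((X c').card : ℝ) := (Finset.mem_filter.mp hc').2
    set T : Finset (Sym2 (Fin n) × Sym2 (Fin n)) :=
      (X c).biUnion (fun e => ((X c').filter (fun e' => AuxAdj G C e e')).image
        (fun e' => (e, e'))) with hTdef
    have hsubT : B.filter (fun p => (g p.1, g p.2) = (c, c')) ⊆ T := by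
      intro p hp
      obtain ⟨hpB, hpg⟩ := Finset.mem_filter.mp hp
      obtain ⟨hpA, h1, h2⟩ := Finset.mem_filter.mp hpB
      have hg1 : g p.1 = c := congrArg Prod.fst hpg
      have hg2 : g p.2 = c' := congrArg Prod.snd hpg
      have hx1 : p.1 ∈ X c := hg1 ▸ (hUg _ h1).2
      have hx2 : p.2 ∈ X c' := hg2 ▸ (hUg _ h2).2
      exact Finset.mem_biUnion.mpr ⟨p.1, hx1, Finset.mem_image.mpr
        ⟨p.2, Finset.mem_filter.mpr ⟨hx2, (hmemA p).mp hpA⟩, rfl⟩⟩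
    have hTcard : T.card = ∑ e ∈ X c, ((X c').filter (fun e' => AuxAdj G C e e')).card := by
      rw [hTdef, Finset.card_biUnion]
      · exact Finset.sum_congr rfl fun e _ =>
          Finset.card_image_of_injective _ (fun a b hab => (Prod.ext_iff.mp hab).2)
      · intro e he e₂ he₂ hne
        rw [Function.onFun, Finset.disjoint_left]
        intro p hp hp₂
        have h1 : p.1 = e := by obtain ⟨a, _, rfl⟩ := Finset.mem_image.mp hp; rfl
        have h2 : p.1 = e₂ := by obtain ⟨a, _, rfl⟩ := Finset.mem_image.mp hp₂; rfl
        exact hne (h1.symm.trans h2)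
    have hnbhd : ∀ e : Sym2 (Fin n), ((auxNeighborSet G C e ∩ ↑(X c')).ncard : ℝ)
        = (((X c').filter (fun e' => AuxAdj G C e e')).card : ℝ) := by
      intro e
      have hseteq : auxNeighborSet G C e ∩ ↑(X c')
          = ↑((X c').filter (fun e' => AuxAdj G C e e')) := by
        ext e'
        constructor
        · rintro ⟨h1, h2⟩
          exact Finset.mem_coe.mpr (Finset.mem_filter.mpr ⟨Finset.mem_coe.mp h2, h1⟩)
        · intro h
          obtain ⟨h1, h2⟩ := Finset.mem_filter.mp (Finset.mem_coe.mp h)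
          exact ⟨h2, Finset.mem_coe.mpr h1⟩
      rw [hseteq, Set.ncard_coe_finset]
    have hcon' := hcon c c' (X c) (X c') (hXsub c) (hXsub c') hbigc hbigc'
    have hsum0 : (∑ e ∈ X c, ((auxNeighborSet G C e ∩ ↑(X c')).ncard : ℝ))
        = ∑ e ∈ X c, (((X c').filter (fun e' => AuxAdj G C e e')).card : ℝ) :=
      Finset.sum_congr rfl fun e _ => hnbhd e
    rw [hsum0] at hcon'
    set u : ℝ := (((X c ∪ X c').card : ℕ) : ℝ) with hudef
    have hu0 : 0 < u := by
      refine lt_of_lt_of_le (Real.rpow_pos_of_pos hR0 (δ / 2)) (le_trans hbigc ?_)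
      rw [hudef]
      exact_mod_cast Finset.card_le_card (Finset.subset_union_left : X c ⊆ X c ∪ X c')
    have huR : u ≤ R := by
      have h1 : (X c ∪ X c').card ≤ C.edgeFinset.card :=
        Finset.card_le_card (Finset.union_subset (hXsubC c) (hXsubC c'))
      rw [hCe] at h1
      rw [hudef, hRdef]
      exact_mod_cast h1
    have husum : u ≤ ((X c).card : ℝ) + ((X c').card : ℝ) := by
      rw [hudef]
      exact_mod_cast Finset.card_union_le (X c) (X c')
    have hupow : u ^ (1 + η) ≤ (((X c).card : ℝ) + ((X c').card : ℝ)) * R ^ η := by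
      rw [Real.rpow_add hu0, Real.rpow_one]
      exact mul_le_mul husum (Real.rpow_le_rpow hu0.le huR hη0.le)
        (Real.rpow_nonneg hu0.le η) (add_nonneg (Nat.cast_nonneg _) (Nat.cast_nonneg _))
    have hchain : ((B.filter (fun p => (g p.1, g p.2) = (c, c'))).card : ℝ) ≤ (T.card : ℝ) := by
      exact_mod_cast Finset.card_le_card hsubT
    have hTreal : (T.card : ℝ) = ∑ e ∈ X c, (((X c').filter (fun e' => AuxAdj G C e e')).card : ℝ) := by
      rw [hTcard]; push_cast; rfl
    calc ((B.filter (fun p => (g p.1, g p.2) = (c, c'))).card : ℝ)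
        ≤ (T.card : ℝ) := hchain
      _ = ∑ e ∈ X c, (((X c').filter (fun e' => AuxAdj G C e e')).card : ℝ) := hTreal
      _ ≤ 4 * u ^ (1 + η) := hcon'.le
      _ ≤ 4 * ((((X c).card : ℝ) + ((X c').card : ℝ)) * R ^ η) := by linarith [hupow]
      _ = 4 * R ^ η * (((X c).card : ℝ) + ((X c').card : ℝ)) := by ring
  -- total bound on B
  have hB : (B.card : ℝ) ≤ 8 * (R ^ (1 - δ) * (R * R ^ η)) := by
    have h0 : (B.card : ℝ)
        = ∑ cc ∈ bigs ×ˢ bigs, ((B.filter (fun p => (g p.1, g p.2) = cc)).card : ℝ) := by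
      rw [hBfib]; push_cast; rfl
    have h1 : (B.card : ℝ) ≤ ∑ cc ∈ bigs ×ˢ bigs,
        4 * R ^ η * (((X cc.1).card : ℝ) + ((X cc.2).card : ℝ)) := by
      rw [h0]; exact Finset.sum_le_sum hfib
    have h2 : ∑ cc ∈ bigs ×ˢ bigs, (((X cc.1).card : ℝ) + ((X cc.2).card : ℝ))
        = 2 * (bigs.card : ℝ) * ∑ c ∈ bigs, ((X c).card : ℝ) := by
      rw [Finset.sum_product]
      calc ∑ c ∈ bigs, ∑ c' ∈ bigs, (((X c).card : ℝ) + ((X c').card : ℝ))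
          = ∑ c ∈ bigs, ((bigs.card : ℝ) * ((X c).card : ℝ)
              + ∑ c' ∈ bigs, ((X c').card : ℝ)) := by
            refine Finset.sum_congr rfl fun c _ => ?_
            rw [Finset.sum_add_distrib, Finset.sum_const, nsmul_eq_mul]
        _ = 2 * (bigs.card : ℝ) * ∑ c ∈ bigs, ((X c).card : ℝ) := by
            rw [Finset.sum_add_distrib, Finset.sum_const, nsmul_eq_mul, ← Finset.mul_sum]
            ring
    have hS : ∑ c ∈ bigs, ((X c).card : ℝ) ≤ R := by
      rw [hRdef]
      exact_mod_cast hXsum bigs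
    have hS0 : (0:ℝ) ≤ ∑ c ∈ bigs, ((X c).card : ℝ) :=
      Finset.sum_nonneg fun c _ => Nat.cast_nonneg _
    have h3 : (bigs.card : ℝ) * (∑ c ∈ bigs, ((X c).card : ℝ)) ≤ R ^ (1 - δ) * R :=
      mul_le_mul hbigscard hS hS0 (Real.rpow_nonneg hR0.le _)
    have h4 : ∑ cc ∈ bigs ×ˢ bigs, 4 * R ^ η * (((X cc.1).card : ℝ) + ((X cc.2).card : ℝ))
        = 4 * R ^ η * (2 * (bigs.card : ℝ) * ∑ c ∈ bigs, ((X c).card : ℝ)) := by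
      rw [← Finset.mul_sum, h2]
    have h5 : (0:ℝ) < R ^ η := Real.rpow_pos_of_pos hR0 η
    rw [h4] at h1
    nlinarith [h1, h3, h5.le]
  -- final contradiction
  have e1 : R * R ^ η = R ^ (1 + η) := by rw [← hadd, Real.rpow_one]
  have e2 : R ^ (1 - δ) * R ^ (1 + η) = R ^ (2 - δ + η) := by
    rw [hadd, show 1 - δ + (1 + η) = 2 - δ + η by ring]
  have e3 : R ^ (1 - δ / 2) * R = R ^ (2 - δ / 2) := by
    rw [show R ^ (1 - δ / 2) * R = R ^ (1 - δ / 2) * R ^ (1:ℝ) by rw [Real.rpow_one],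
      hadd, show 1 - δ / 2 + 1 = 2 - δ / 2 by ring]
  have m1 : R ^ (2 - δ + η) ≤ R ^ (2 - η - 3 * δ / 8) := hmono _ _ (by linarith)
  have m2 : R ^ (2 - δ / 2) ≤ R ^ (2 - η - 3 * δ / 8) := hmono _ _ (by linarith)
  have hAfinal : (A.card : ℝ) ≤ 34 * R ^ (2 - η - 3 * δ / 8) := by
    have hB' : (B.card : ℝ) ≤ 8 * R ^ (2 - η - 3 * δ / 8) := by
      rw [e1, e2] at hB; linarith [hB, m1]
    have hDW' : 26 * R ^ (1 - δ / 2) * R ≤ 26 * R ^ (2 - η - 3 * δ / 8) := by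
      rw [mul_assoc, e3]; linarith [m2]
    linarith [hAB, hB', hDW']
  have hP : (0:ℝ) < R ^ (2 - η - 3 * δ / 8) := Real.rpow_pos_of_pos hR0 _
  have hRe : R ^ (2 - η) = R ^ (2 - η - 3 * δ / 8) * R ^ (3 * δ / 8) := by
    rw [hadd, show 2 - η - 3 * δ / 8 + 3 * δ / 8 = 2 - η by ring]
  have h68' : 68 * R ^ (2 - η - 3 * δ / 8) ≤ R ^ (2 - η) := by
    rw [hRe]
    nlinarith [h68, hP]
  linarith [hAcard, hAfinal, h68', hP]
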